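/- arXiv:2412.18982 — 5 statements merged into one kernel-verified Lean document; each statement's English description precedes it below -/
import Mathlib

section
/- Let 𝒜 be an almost disjoint family on ω, and let ℬ, 𝒞 ⊆ 𝒜 be disjoint. Then ℬ and 𝒞 can be separated by a set X ⊆ ω (i.e., b ⊆* X for all b ∈ ℬ and c ∩ X =* ∅ for all c ∈ 𝒞) if and only if there exist disjoint open sets G, G′ in the Isbell–Mrówka space Ψ(𝒜) with ℬ ⊆ G and 𝒞 ⊆ G′. -/
/-- An almost disjoint family on `N`: infinite sets with pairwise finite intersections. -/
def IsAlmostDisjointFamily {N : Type} (A : Set (Set N)) : Prop :=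
  (∀ a ∈ A, a.Infinite) ∧ ∀ a ∈ A, ∀ b ∈ A, a ≠ b → (a ∩ b).Finite

/-- Carrier of the Isbell–Mrówka space of `A`. -/
def Psi (N : Type) (A : Set (Set N)) : Type := N ⊕ ↥A

/-- Basic open sets of the Isbell–Mrówka space: singletons of isolated points of `N`,
and sets of the form `{a} ∪ (a \ F)` for `a ∈ A` and finite `F ⊆ N`. -/
def psiBasic (N : Type) (A : Set (Set N)) : Set (Set (Psi N A)) :=
  {s | ∃ n : N, s = {(Sum.inl n : Psi N A)}} ∪
  {s | ∃ (a : ↥A) (F : Finset N),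
      s = insert (Sum.inr a) ((Sum.inl : N → Psi N A) '' ((a : Set N) \ ↑F))}

/-- The Isbell–Mrówka topology. -/
def psiTopology (N : Type) (A : Set (Set N)) : TopologicalSpace (Psi N A) :=
  TopologicalSpace.generateFrom (psiBasic N A)

instance (N : Type) (A : Set (Set N)) : TopologicalSpace (Psi N A) := psiTopology N A

lemma psi_basic_open {A : Set (Set ℕ)} {s : Set (Psi ℕ A)} (h : s ∈ psiBasic ℕ A) :
    IsOpen s := TopologicalSpace.GenerateOpen.basic s h

lemma psi_open_side {A : Set (Set ℕ)} (X : Set ℕ) (B : Set (Set ℕ))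
    (h : ∀ b ∈ B, (b \ X).Finite) :
    IsOpen ((Sum.inl '' X ∪ Sum.inr '' {a : ↥A | (a : Set ℕ) ∈ B} : Set (Psi ℕ A))) := by
  rw [isOpen_iff_forall_mem_open]
  rintro p (⟨n, hn, rfl⟩ | ⟨a, ha, rfl⟩)
  · refine ⟨{Sum.inl n}, ?_, psi_basic_open (Or.inl ⟨n, rfl⟩), rfl⟩
    intro q hq; replace hq : q = Sum.inl n := hq; subst hq
    exact Or.inl ⟨n, hn, rfl⟩
  · have hfin : ((a : Set ℕ) \ X).Finite := h a ha
    refine ⟨insert (Sum.inr a) (Sum.inl '' ((a : Set ℕ) \ ↑hfin.toFinset)), ?_,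
      psi_basic_open (Or.inr ⟨a, hfin.toFinset, rfl⟩), Set.mem_insert _ _⟩
    rintro q (rfl | ⟨n, hn, rfl⟩)
    · exact Or.inr ⟨a, ha, rfl⟩
    · refine Or.inl ⟨n, ?_, rfl⟩
      by_contra hnX
      exact hn.2 (hfin.mem_toFinset.mpr ⟨hn.1, hnX⟩)

lemma psi_open_nbhd {A : Set (Set ℕ)} {G : Set (Psi ℕ A)} (hG : IsOpen G) :
    ∀ a : ↥A, Sum.inr a ∈ G → ∃ F : Finset ℕ,
      ∀ n ∈ (a : Set ℕ) \ ↑F, (Sum.inl n : Psi ℕ A) ∈ G := by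
  have hG' : TopologicalSpace.GenerateOpen (psiBasic ℕ A) G := hG
  clear hG
  induction hG' with
  | basic s hs =>
    intro a ha
    rcases hs with ⟨n, rfl⟩ | ⟨a', F, rfl⟩
    · change (Sum.inr a : ℕ ⊕ ↥A) = Sum.inl n at ha; simp at ha
    · rcases ha with h | ⟨n, _, h⟩
      · obtain rfl : a' = a := by injection h.symm
        exact ⟨F, fun n hn => Or.inr ⟨n, hn, rfl⟩⟩
      · exact absurd h (by simp)
  | univ => exact fun a _ => ⟨∅, fun n _ => trivial⟩
  | inter s t _ _ ihs iht =>
    intro a ha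
    obtain ⟨F1, h1⟩ := ihs a ha.1
    obtain ⟨F2, h2⟩ := iht a ha.2
    refine ⟨F1 ∪ F2, fun n hn => ⟨?_, ?_⟩⟩
    · exact h1 n ⟨hn.1, fun h => hn.2 (by simp [h])⟩
    · exact h2 n ⟨hn.1, fun h => hn.2 (by simp [h])⟩
  | sUnion S hS ih =>
    intro a ha
    obtain ⟨s, hsS, has⟩ := ha
    obtain ⟨F, hF⟩ := ih s hsS a has
    exact ⟨F, fun n hn => ⟨s, hsS, hF n hn⟩⟩

theorem separation_iff_open_separation_in_psi (A : Set (Set ℕ))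
    (hA : IsAlmostDisjointFamily A) (B C : Set (Set ℕ))
    (hB : B ⊆ A) (hC : C ⊆ A) (hBC : Disjoint B C) :
    (∃ X : Set ℕ, (∀ b ∈ B, (b \ X).Finite) ∧ (∀ c ∈ C, (c ∩ X).Finite)) ↔
    (∃ G G' : Set (Psi ℕ A), IsOpen G ∧ IsOpen G' ∧ Disjoint G G' ∧
      (∀ a : ↥A, (a : Set ℕ) ∈ B → (Sum.inr a : Psi ℕ A) ∈ G) ∧
      (∀ a : ↥A, (a : Set ℕ) ∈ C → (Sum.inr a : Psi ℕ A) ∈ G')) := by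
  constructor
  · rintro ⟨X, hBX, hCX⟩
    refine ⟨Sum.inl '' X ∪ Sum.inr '' {a : ↥A | (a : Set ℕ) ∈ B},
            Sum.inl '' Xᶜ ∪ Sum.inr '' {a : ↥A | (a : Set ℕ) ∈ C},
            psi_open_side X B hBX,
            psi_open_side Xᶜ C (fun c hc => (hCX c hc).subset (by intro n hn; exact ⟨hn.1, Set.not_notMem.mp hn.2⟩)),
            ?_, fun a ha => Or.inr ⟨a, ha, rfl⟩, fun a ha => Or.inr ⟨a, ha, rfl⟩⟩
    rw [Set.disjoint_left]
    rintro p (⟨n, hn, rfl⟩ | ⟨a, ha, rfl⟩) (⟨m, hm, h⟩ | ⟨a', ha', h⟩)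
    · obtain rfl : m = n := by injection h
      exact hm hn
    · exact absurd h (by simp)
    · exact absurd h (by simp)
    · obtain rfl : a' = a := by injection h
      exact hBC.le_bot ⟨ha, ha'⟩
  · rintro ⟨G, G', hG, hG', hdisj, hBG, hCG'⟩
    refine ⟨{n | (Sum.inl n : Psi ℕ A) ∈ G}, ?_, ?_⟩
    · intro b hb
      obtain ⟨F, hF⟩ := psi_open_nbhd hG ⟨b, hB hb⟩ (hBG ⟨b, hB hb⟩ hb)
      refine F.finite_toSet.subset ?_
      intro n hn
      by_contra hnF
      exact hn.2 (hF n ⟨hn.1, hnF⟩)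
    · intro c hc
      obtain ⟨F, hF⟩ := psi_open_nbhd hG' ⟨c, hC hc⟩ (hCG' ⟨c, hC hc⟩ hc)
      refine F.finite_toSet.subset ?_
      intro n hn
      by_contra hnF
      exact hdisj.le_bot ⟨hn.2, hF n ⟨hn.1, hnF⟩⟩
end

section
/- If X ⊆ 2^ω contains a perfect subset, then for every uniformity 𝕌 compatible with the topology of the Isbell–Mrówka space Ψ(𝒜_X) of the branching family 𝒜_X, Player II has a winning strategy in the proximal game on (Ψ(𝒜_X), 𝕌); in particular Ψ(𝒜_X) is not semi-proximal. -/
/-- Player II's responses along a run `U` of entourages, following strategy `σ`: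
the `n`-th point is `σ (U 0, …, U n)`. -/
def respondsTo {X : Type*} (σ : List (Set (X × X)) → X)
    (U : ℕ → Set (X × X)) (n : ℕ) : X :=
  σ ((List.range (n + 1)).map U)

/-- `σ` is a winning strategy for Player II in the proximal game on the uniform space `X`:
against every decreasing sequence of entourages played by Player I, the responses of `σ`
are legal (`x_{n+1} ∈ U_n[x_n]`), do not converge, and `⋂ₙ U_n[x_n] ≠ ∅`. -/
def IsWinningStrategyForII {X : Type*} [UniformSpace X]
    (σ : List (Set (X × X)) → X) : Prop :=
  ∀ U : ℕ → Set (X × X), (∀ n, U n ∈ uniformity X) → (∀ n, U (n + 1) ⊆ U n) →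
    (∀ n, respondsTo σ U (n + 1) ∈ UniformSpace.ball (respondsTo σ U n) (U n)) ∧
    (¬ ∃ l : X, Filter.Tendsto (respondsTo σ U) Filter.atTop (nhds l)) ∧
    (⋂ n, UniformSpace.ball (respondsTo σ U n) (U n)).Nonempty

/-- The branch through `x ∈ 2^ω`: the set of its finite initial segments in `2^{<ω}`. -/
def branchOf (x : ℕ → Bool) : Set (List Bool) :=
  {l | ∃ n : ℕ, l = (List.range n).map x}

/-- The branching almost disjoint family `𝒜_X` on `2^{<ω}`. -/
def branchFam (X : Set (ℕ → Bool)) : Set (Set (List Bool)) :=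
  {a | ∃ x ∈ X, a = branchOf x}


noncomputable section
open Set Filter Topology TopologicalSpace

/-- restriction of a branch -/
def restr (y : ℕ → Bool) (n : ℕ) : List Bool := (List.range n).map y

lemma restr_length (y : ℕ → Bool) (n : ℕ) : (restr y n).length = n := by simp [restr]

lemma restr_getElem (y : ℕ → Bool) (n i : ℕ) (h : i < (restr y n).length) :
    (restr y n)[i] = y i := by
  simp [restr]

lemma restr_mem_branchOf (y : ℕ → Bool) (n : ℕ) : restr y n ∈ branchOf y := ⟨n, rfl⟩

lemma mem_branchOf_iff {y : ℕ → Bool} {l : List Bool} :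
    l ∈ branchOf y ↔ l = restr y l.length := by
  constructor
  · rintro ⟨n, rfl⟩
    have : ((List.range n).map y).length = n := by simp
    rw [this]; rfl
  · intro h; exact ⟨l.length, h⟩

lemma restr_take (y : ℕ → Bool) {m n : ℕ} (h : m ≤ n) :
    (restr y n).take m = restr y m := by
  rw [restr, restr, ← List.map_take, List.take_range]
  congr 2
  omega

lemma restr_prefix (y : ℕ → Bool) {m n : ℕ} (h : m ≤ n) : restr y m <+: restr y n := by
  rw [List.prefix_iff_eq_take, restr_length, restr_take y h]

lemma restr_eq_iff {y z : ℕ → Bool} {n : ℕ} :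
    restr y n = restr z n ↔ ∀ i < n, y i = z i := by
  constructor
  · intro h i hi
    have h1 : i < (restr y n).length := by rw [restr_length]; exact hi
    have h2 : i < (restr z n).length := by rw [restr_length]; exact hi
    have h3 := List.getElem_of_eq h h1
    rw [restr_getElem y n i h1] at h3
    rw [restr_getElem z n i h2] at h3
    exact h3
  · intro h
    apply List.ext_getElem (by simp [restr_length])
    intro i h1 h2
    rw [restr_getElem, restr_getElem]
    exact h i (by rw [restr_length] at h1; exact h1)

lemma branchOf_inj {y z : ℕ → Bool} (h : branchOf y = branchOf z) : y = z := by
  funext i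
  have h1 : restr y (i+1) ∈ branchOf z := h ▸ restr_mem_branchOf y (i+1)
  rw [mem_branchOf_iff, restr_length] at h1
  exact restr_eq_iff.mp h1 i (Nat.lt_succ_self i)

variable {X : Set (ℕ → Bool)}

open scoped Classical in
/-- total "limit point" map; junk value off `X`. -/
def pt (X : Set (ℕ → Bool)) (y : ℕ → Bool) : Psi (List Bool) (branchFam X) :=
  if h : y ∈ X then Sum.inr ⟨branchOf y, ⟨y, h, rfl⟩⟩ else Sum.inl []

lemma pt_eq {y : ℕ → Bool} (h : y ∈ X) :
    pt X y = Sum.inr ⟨branchOf y, ⟨y, h, rfl⟩⟩ := by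
  unfold pt; exact dif_pos h

lemma pt_inj {y z : ℕ → Bool} (hy : y ∈ X) (hz : z ∈ X) (h : pt X y = pt X z) : y = z := by
  rw [pt_eq hy, pt_eq hz] at h
  exact branchOf_inj (congrArg Subtype.val (Sum.inr.inj h))

/-! ### topology lemmas -/

lemma psi_generateOpen_inr {O : Set (Psi (List Bool) (branchFam X))}
    (hO : TopologicalSpace.GenerateOpen (psiBasic (List Bool) (branchFam X)) O) :
    ∀ a : ↥(branchFam X), Sum.inr a ∈ O →
      ∃ F : Finset (List Bool),
        insert (Sum.inr a) ((Sum.inl : List Bool → Psi (List Bool) (branchFam X)) ''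
          ((a : Set (List Bool)) \ ↑F)) ⊆ O := by
  induction hO with
  | basic s hs =>
      intro a ha
      rcases hs with ⟨n, rfl⟩ | ⟨b, F, rfl⟩
      · exact (Sum.inr_ne_inl ha).elim
      · have hab : a = b := by
          rcases ha with h | ⟨l, _, hl⟩
          · exact Sum.inr.inj h
          · exact absurd hl (by simp)
        subst hab
        exact ⟨F, subset_rfl⟩
  | univ => intro a _; exact ⟨∅, subset_univ _⟩
  | inter s t _ _ ihs iht =>
      intro a ha
      obtain ⟨F1, h1⟩ := ihs a ha.1
      obtain ⟨F2, h2⟩ := iht a ha.2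
      refine ⟨F1 ∪ F2, fun p hp => ?_⟩
      rcases hp with hp | ⟨l, ⟨hl1, hl2⟩, rfl⟩
      · exact ⟨h1 (by rw [hp]; exact mem_insert _ _), h2 (by rw [hp]; exact mem_insert _ _)⟩
      · rw [Finset.coe_union] at hl2
        constructor
        · exact h1 (Or.inr ⟨l, ⟨hl1, fun hh => hl2 (Or.inl hh)⟩, rfl⟩)
        · exact h2 (Or.inr ⟨l, ⟨hl1, fun hh => hl2 (Or.inr hh)⟩, rfl⟩)
  | sUnion S _ ih =>
      rintro a ⟨O', hO', haO⟩
      obtain ⟨F, hF⟩ := ih O' hO' a haO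
      exact ⟨F, hF.trans (subset_sUnion_of_mem hO')⟩

lemma psi_nhds_inr {a : ↥(branchFam X)} {S : Set (Psi (List Bool) (branchFam X))}
    (hS : S ∈ @nhds _ (psiTopology (List Bool) (branchFam X)) (Sum.inr a)) :
    ∃ F : Finset (List Bool),
      insert (Sum.inr a) ((Sum.inl : List Bool → Psi (List Bool) (branchFam X)) ''
        ((a : Set (List Bool)) \ ↑F)) ⊆ S := by
  replace hS := (@mem_nhds_iff _ (psiTopology (List Bool) (branchFam X)) _ _).mp hS
  obtain ⟨O, hOS, hO, haO⟩ := hS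
  obtain ⟨F, hF⟩ := psi_generateOpen_inr hO a haO
  exact ⟨F, hF.trans hOS⟩

lemma psi_isOpen_basic {s : Set (Psi (List Bool) (branchFam X))}
    (hs : s ∈ psiBasic (List Bool) (branchFam X)) :
    IsOpen[psiTopology (List Bool) (branchFam X)] s :=
  TopologicalSpace.GenerateOpen.basic s hs



/-- A nonempty closed set of `2^ω` without isolated points is uncountable. -/
lemma uncountable_of_perfect {C : Set (ℕ → Bool)} (hne : C.Nonempty) (hcl : IsClosed C)
    (hacc : ∀ x ∈ C, x ∈ closure (C \ {x})) : ¬ C.Countable := by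
  intro hcount
  haveI : CompactSpace ↥C := isCompact_iff_compactSpace.mp hcl.isCompact
  haveI : T2Space ↥C := inferInstance
  haveI : LocallyCompactSpace ↥C := by infer_instance
  haveI : BaireSpace ↥C := by infer_instance
  haveI : Countable ↥C := hcount.to_subtype
  haveI : Nonempty ↥C := hne.to_subtype
  have hNB : ∀ z : ↥C, (𝓝[≠] z).NeBot := by
    intro z
    have h2 := hacc z z.2
    have himg : Subtype.val '' ({z}ᶜ : Set ↥C) = C \ {(z : ℕ → Bool)} := by
      ext w
      constructor
      · rintro ⟨v, hv, rfl⟩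
        exact ⟨v.2, fun hh => hv (by ext1; exact hh)⟩
      · rintro ⟨hwC, hwz⟩
        exact ⟨⟨w, hwC⟩, fun hh => hwz (congrArg Subtype.val hh), rfl⟩
    have : z ∈ closure ({z}ᶜ : Set ↥C) := by
      rw [closure_subtype, himg]; exact h2
    rw [mem_closure_iff_nhdsWithin_neBot] at this
    exact this
  have hd : ∀ z : ↥C, Dense ({z}ᶜ : Set ↥C) := by
    intro z
    haveI := hNB z
    exact dense_compl_singleton _
  have hD : Dense (⋂ z : ↥C, ({z}ᶜ : Set ↥C)) :=
    dense_iInter_of_isOpen (fun z => isOpen_compl_singleton) hd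
  obtain ⟨w, hw⟩ := hD.nonempty
  exact (mem_iInter.mp hw w) rfl

/-- uncountable pigeonhole -/
lemma unc_pigeonhole {α : Type*} {ι : Type*} [Countable ι] {A : Set α} (hA : ¬ A.Countable)
    (f : ι → Set α) (hcov : A ⊆ ⋃ i, f i) : ∃ i, ¬ (A ∩ f i).Countable := by
  by_contra h
  push_neg at h
  apply hA
  have : A ⊆ ⋃ i, (A ∩ f i) := by
    intro x hx
    obtain ⟨i, hi⟩ := mem_iUnion.mp (hcov hx)
    exact mem_iUnion.mpr ⟨i, hx, hi⟩
  exact (countable_iUnion h).mono this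

lemma unc_nonempty {α : Type*} {A : Set α} (hA : ¬ A.Countable) : A.Nonempty := by
  rcases A.eq_empty_or_nonempty with rfl | h
  · exact absurd countable_empty hA
  · exact h

lemma unc_diff_list {α : Type*} {A : Set α} (hA : ¬ A.Countable) (l : List α) :
    (A \ {y | y ∈ l}).Nonempty := by
  apply unc_nonempty
  intro hc
  apply hA
  have : A ⊆ (A \ {y | y ∈ l}) ∪ {y | y ∈ l} := fun x hx => by
    by_cases h : x ∈ l
    · exact Or.inr h
    · exact Or.inl ⟨hx, h⟩
  exact (hc.union l.finite_toSet.countable).mono this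

section Unif
variable {Ω : Type*} (u : UniformSpace Ω)

/-- four-fold symmetric refinement -/
lemma comp4_exists {S : Set (Ω × Ω)} (hS : S ∈ @uniformity Ω u) :
    ∃ V ∈ @uniformity Ω u, SetRel.IsSymm V ∧
      (∀ a b c d e : Ω, (a,b) ∈ V → (b,c) ∈ V → (c,d) ∈ V → (d,e) ∈ V → (a,e) ∈ S) := by
  obtain ⟨W, hW, hWs, hWc⟩ := comp_symm_mem_uniformity_sets hS
  obtain ⟨V, hV, hVs, hVc⟩ := comp_symm_mem_uniformity_sets hW
  refine ⟨V, hV, hVs, fun a b c d e h1 h2 h3 h4 => ?_⟩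
  exact hWc (SetRel.mem_comp.mpr ⟨c, hVc (SetRel.mem_comp.mpr ⟨b, h1, h2⟩), hVc (SetRel.mem_comp.mpr ⟨d, h3, h4⟩)⟩)

open scoped Classical in
/-- one refinement step -/
def zstep (S : Set (Ω × Ω)) : Set (Ω × Ω) :=
  if h : S ∈ @uniformity Ω u then (comp4_exists u h).choose else Set.univ

lemma zstep_spec {S : Set (Ω × Ω)} (hS : S ∈ @uniformity Ω u) :
    zstep u S ∈ @uniformity Ω u ∧ SetRel.IsSymm (zstep u S) ∧
      (∀ a b c d e : Ω, (a,b) ∈ zstep u S → (b,c) ∈ zstep u S → (c,d) ∈ zstep u S →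
        (d,e) ∈ zstep u S → (a,e) ∈ S) := by
  rw [zstep, dif_pos hS]
  obtain ⟨h1, h2, h3⟩ := (comp4_exists u hS).choose_spec
  exact ⟨h1, h2, h3⟩

/-- the derived entourage sequence -/
def Zseq (U : ℕ → Set (Ω × Ω)) : ℕ → Set (Ω × Ω) :=
  fun n => Nat.rec (zstep u (U 0)) (fun m Zm => zstep u (Zm ∩ U (m+1))) n

lemma Zseq_zero (U : ℕ → Set (Ω × Ω)) : Zseq u U 0 = zstep u (U 0) := rfl
lemma Zseq_succ (U : ℕ → Set (Ω × Ω)) (n : ℕ) :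
    Zseq u U (n+1) = zstep u (Zseq u U n ∩ U (n+1)) := rfl

variable {u}

lemma Zseq_props {U : ℕ → Set (Ω × Ω)} (hU : ∀ n, U n ∈ @uniformity Ω u) (n : ℕ) :
    Zseq u U n ∈ @uniformity Ω u ∧ SetRel.IsSymm (Zseq u U n) ∧
      (∀ a b c d e : Ω, (a,b) ∈ Zseq u U n → (b,c) ∈ Zseq u U n → (c,d) ∈ Zseq u U n →
        (d,e) ∈ Zseq u U n → (a,e) ∈ U n) ∧
      (∀ m, n = m + 1 → Zseq u U n ⊆ Zseq u U m) := by
  induction n with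
  | zero =>
      obtain ⟨h1, h2, h3⟩ := zstep_spec u (hU 0)
      exact ⟨h1, h2, h3, fun m hm => by omega⟩
  | succ n ih =>
      have hmem : Zseq u U n ∩ U (n+1) ∈ @uniformity Ω u := Filter.inter_mem ih.1 (hU (n+1))
      obtain ⟨h1, h2, h3⟩ := zstep_spec u hmem
      rw [← Zseq_succ] at h1 h2 h3
      refine ⟨h1, h2, fun a b c d e ha hb hc hd => (h3 a b c d e ha hb hc hd).2, ?_⟩
      intro m hm
      have hm' : m = n := by omega
      subst hm'
      intro p hp
      have hrefl : ∀ x : Ω, (x, x) ∈ Zseq u U (m+1) := fun x => refl_mem_uniformity h1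
      exact (h3 p.1 p.2 p.2 p.2 p.2 hp (hrefl p.2) (hrefl p.2) (hrefl p.2)).1

lemma Zseq_mem {U : ℕ → Set (Ω × Ω)} (hU : ∀ n, U n ∈ @uniformity Ω u) (n : ℕ) :
    Zseq u U n ∈ @uniformity Ω u := (Zseq_props hU n).1

lemma Zseq_symm {U : ℕ → Set (Ω × Ω)} (hU : ∀ n, U n ∈ @uniformity Ω u) (n : ℕ) :
    SetRel.IsSymm (Zseq u U n) := (Zseq_props hU n).2.1

lemma Zseq_comp4 {U : ℕ → Set (Ω × Ω)} (hU : ∀ n, U n ∈ @uniformity Ω u) (n : ℕ)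
    {a b c d e : Ω} (h1 : (a,b) ∈ Zseq u U n) (h2 : (b,c) ∈ Zseq u U n)
    (h3 : (c,d) ∈ Zseq u U n) (h4 : (d,e) ∈ Zseq u U n) : (a,e) ∈ U n :=
  (Zseq_props hU n).2.2.1 a b c d e h1 h2 h3 h4

lemma Zseq_antitone {U : ℕ → Set (Ω × Ω)} (hU : ∀ n, U n ∈ @uniformity Ω u) {m n : ℕ}
    (h : m ≤ n) : Zseq u U n ⊆ Zseq u U m := by
  induction n with
  | zero => have : m = 0 := by omega
            subst this; exact subset_rfl
  | succ n ih =>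
      rcases Nat.eq_or_lt_of_le h with rfl | h'
      · exact subset_rfl
      · exact ((Zseq_props hU (n+1)).2.2.2 n rfl).trans (ih (by omega))

lemma Zseq_congr {U V : ℕ → Set (Ω × Ω)} (n : ℕ) (h : ∀ i ≤ n, U i = V i) :
    Zseq u U n = Zseq u V n := by
  induction n with
  | zero => rw [Zseq_zero, Zseq_zero, h 0 (le_refl 0)]
  | succ n ih =>
      rw [Zseq_succ, Zseq_succ, ih (fun i hi => h i (by omega)), h (n+1) (le_refl _)]

end Unif

section Strategy
open Set Filter Topology TopologicalSpace

variable {X : Set (ℕ → Bool)}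

open scoped Classical in
/-- threshold of an entourage at the limit point of branch `y` -/
def thrF (W : Set (Psi (List Bool) (branchFam X) × Psi (List Bool) (branchFam X)))
    (y : ℕ → Bool) : ℕ :=
  if h : ∃ k, ∀ j, k ≤ j → (pt X y, Sum.inl (restr y j)) ∈ W then h.choose else 0

lemma thrF_spec {W : Set (Psi (List Bool) (branchFam X) × Psi (List Bool) (branchFam X))}
    {y : ℕ → Bool} (h : ∃ k, ∀ j, k ≤ j → (pt X y, Sum.inl (restr y j)) ∈ W) :
    ∀ j, thrF W y ≤ j → (pt X y, Sum.inl (restr y j)) ∈ W := by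
  rw [thrF, dif_pos h]
  exact h.choose_spec

/-- existence of thresholds, from compatibility of the uniformity -/
lemma thr_ex (u : UniformSpace (Psi (List Bool) (branchFam X)))
    (hu : u.toTopologicalSpace = psiTopology (List Bool) (branchFam X))
    {W : Set (Psi (List Bool) (branchFam X) × Psi (List Bool) (branchFam X))}
    (hW : W ∈ @uniformity _ u) {y : ℕ → Bool} (hy : y ∈ X) :
    ∃ k, ∀ j, k ≤ j → (pt X y, Sum.inl (restr y j)) ∈ W := by
  have hb : UniformSpace.ball (pt X y) W ∈ @nhds _ u.toTopologicalSpace (pt X y) :=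
    @UniformSpace.ball_mem_nhds _ u (pt X y) W hW
  rw [hu, pt_eq hy] at hb
  obtain ⟨F, hF⟩ := psi_nhds_inr hb
  refine ⟨(F.sup List.length) + 1, fun j hj => ?_⟩
  have h2 : restr y j ∉ (F : Set (List Bool)) := by
    intro hmem
    have := Finset.le_sup (f := List.length) hmem
    rw [restr_length] at this
    omega
  have h3 : (Sum.inl (restr y j) : Psi (List Bool) (branchFam X)) ∈
      insert (Sum.inr (⟨branchOf y, ⟨y, hy, rfl⟩⟩ : ↥(branchFam X)))
        ((Sum.inl : List Bool → Psi (List Bool) (branchFam X)) ''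
          (((⟨branchOf y, ⟨y, hy, rfl⟩⟩ : ↥(branchFam X)) : Set (List Bool)) \ ↑F)) :=
    Or.inr ⟨restr y j, ⟨restr_mem_branchOf y j, h2⟩, rfl⟩
  have h4 := hF h3
  rw [pt_eq hy]
  exact h4

/-- the property of a refined stage -/
def stepProp (W : Set (Psi (List Bool) (branchFam X) × Psi (List Bool) (branchFam X)))
    (n : ℕ) (d p : List Bool × Set (ℕ → Bool)) : Prop :=
  p.2 ⊆ d.2 ∧ ¬ p.2.Countable ∧ (∀ y ∈ p.2, restr y p.1.length = p.1) ∧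
  (∀ y ∈ p.2, (pt X y, Sum.inl p.1) ∈ W) ∧ d.1 <+: p.1 ∧ d.1.length < p.1.length ∧
  n < p.1.length

open scoped Classical in
def stepF (W : Set (Psi (List Bool) (branchFam X) × Psi (List Bool) (branchFam X)))
    (n : ℕ) (d : List Bool × Set (ℕ → Bool)) : List Bool × Set (ℕ → Bool) :=
  if h : ∃ p, stepProp W n d p then h.choose else d

lemma stepF_spec {W : Set (Psi (List Bool) (branchFam X) × Psi (List Bool) (branchFam X))}
    {n : ℕ} {d : List Bool × Set (ℕ → Bool)} (h : ∃ p, stepProp W n d p) :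
    stepProp W n d (stepF W n d) := by
  rw [stepF, dif_pos h]
  exact h.choose_spec

lemma step_ex {W : Set (Psi (List Bool) (branchFam X) × Psi (List Bool) (branchFam X))}
    {n : ℕ} {d : List Bool × Set (ℕ → Bool)} (hunc : ¬ d.2.Countable)
    (hstem : ∀ y ∈ d.2, restr y d.1.length = d.1)
    (hthr : ∀ y ∈ d.2, ∃ k, ∀ j, k ≤ j → (pt X y, Sum.inl (restr y j)) ∈ W) :
    ∃ p, stepProp W n d p := by
  -- first pigeonhole: uniform thresholds
  obtain ⟨k₀, hk₀⟩ := unc_pigeonhole hunc (fun k : ℕ => {y | thrF W y ≤ k})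
    (fun y _ => mem_iUnion.mpr ⟨thrF W y, by simp⟩)
  set G := d.2 ∩ {y | thrF W y ≤ k₀} with hG
  set h : ℕ := max (max (k₀+1) (d.1.length+1)) (n+1) with hh
  -- second pigeonhole: a common stem of length h
  obtain ⟨w₀, hw₀⟩ := unc_pigeonhole hk₀ (fun w : List Bool => {y | restr y h = w})
    (fun y _ => mem_iUnion.mpr ⟨restr y h, by simp⟩)
  set A' := G ∩ {y | restr y h = w₀} with hA'
  obtain ⟨y₀, hy₀⟩ := unc_nonempty hw₀
  have hy₀G : y₀ ∈ G := hy₀.1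
  have hy₀w : restr y₀ h = w₀ := hy₀.2
  have hw₀len : w₀.length = h := by rw [← hy₀w, restr_length]
  refine ⟨(w₀, A'), ?_, hw₀, ?_, ?_, ?_, ?_, ?_⟩
  · exact fun y hy => hy.1.1
  · intro y hy
    show restr y w₀.length = w₀
    rw [hw₀len]
    exact hy.2
  · intro y hy
    have h1 : thrF W y ≤ k₀ := hy.1.2
    have h2 := thrF_spec (hthr y hy.1.1) h (by omega)
    rw [hy.2] at h2
    exact h2
  · show d.1 <+: w₀
    have := hstem y₀ hy₀G.1
    rw [← this, ← hy₀w]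
    exact restr_prefix y₀ (by omega)
  · show d.1.length < w₀.length
    omega
  · show n < w₀.length
    omega

/-- the nested stage construction -/
def StageF (C : Set (ℕ → Bool))
    (Z : ℕ → Set (Psi (List Bool) (branchFam X) × Psi (List Bool) (branchFam X))) :
    ℕ → List Bool × Set (ℕ → Bool) :=
  fun n => Nat.rec (stepF (Z 0) 0 ([], C)) (fun m d => stepF (Z (m+1)) (m+1) d) n

lemma StageF_zero (C : Set (ℕ → Bool)) (Z) :
    StageF (X := X) C Z 0 = stepF (Z 0) 0 ([], C) := rfl

lemma StageF_succ (C : Set (ℕ → Bool)) (Z) (n : ℕ) :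
    StageF (X := X) C Z (n+1) = stepF (Z (n+1)) (n+1) (StageF C Z n) := rfl

lemma StageF_congr (C : Set (ℕ → Bool)) {Z Z'} (n : ℕ) (h : ∀ i ≤ n, Z i = Z' i) :
    StageF (X := X) C Z n = StageF C Z' n := by
  induction n with
  | zero => rw [StageF_zero, StageF_zero, h 0 (le_refl 0)]
  | succ n ih =>
      rw [StageF_succ, StageF_succ, ih (fun i hi => h i (by omega)), h (n+1) (le_refl _)]

/-- the invariant at stage `n` -/
def Good (C : Set (ℕ → Bool))
    (Z : ℕ → Set (Psi (List Bool) (branchFam X) × Psi (List Bool) (branchFam X)))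
    (n : ℕ) : Prop :=
  (StageF C Z n).2 ⊆ C ∧ ¬ (StageF C Z n).2.Countable ∧
  (∀ y ∈ (StageF C Z n).2, restr y (StageF C Z n).1.length = (StageF C Z n).1) ∧
  (∀ y ∈ (StageF C Z n).2, (pt X y, Sum.inl (StageF C Z n).1) ∈ Z n) ∧
  n < (StageF C Z n).1.length

lemma good_all {C : Set (ℕ → Bool)}
    {Z : ℕ → Set (Psi (List Bool) (branchFam X) × Psi (List Bool) (branchFam X))}
    (hCX : C ⊆ X) (hCunc : ¬ C.Countable)
    (hthr : ∀ n, ∀ y, y ∈ X → ∃ k, ∀ j, k ≤ j → (pt X y, Sum.inl (restr y j)) ∈ Z n) :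
    ∀ n, Good C Z n := by
  intro n
  induction n with
  | zero =>
      have hex : ∃ p, stepProp (Z 0) 0 (([], C) : List Bool × Set (ℕ → Bool)) p := by
        apply step_ex hCunc
        · intro y _
          simp [restr]
        · intro y hy
          exact hthr 0 y (hCX hy)
      obtain ⟨h1, h2, h3, h4, h5, h6, h7⟩ := stepF_spec hex
      exact ⟨fun y hy => h1 hy, h2, h3, h4, h7⟩
  | succ n ih =>
      obtain ⟨g1, g2, g3, g4, g5⟩ := ih
      have hex : ∃ p, stepProp (Z (n+1)) (n+1) (StageF C Z n) p := by
        apply step_ex g2 g3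
        intro y hy
        exact hthr (n+1) y (hCX (g1 hy))
      obtain ⟨h1, h2, h3, h4, h5, h6, h7⟩ := stepF_spec hex
      rw [← StageF_succ] at h1 h2 h3 h4 h7
      exact ⟨fun y hy => g1 (h1 hy), h2, h3, h4, h7⟩

lemma stage_chain {C : Set (ℕ → Bool)}
    {Z : ℕ → Set (Psi (List Bool) (branchFam X) × Psi (List Bool) (branchFam X))}
    (hCX : C ⊆ X) (hCunc : ¬ C.Countable)
    (hthr : ∀ n, ∀ y, y ∈ X → ∃ k, ∀ j, k ≤ j → (pt X y, Sum.inl (restr y j)) ∈ Z n)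
    {m n : ℕ} (h : m ≤ n) :
    (StageF C Z n).2 ⊆ (StageF C Z m).2 ∧ (StageF C Z m).1 <+: (StageF C Z n).1 := by
  induction n with
  | zero =>
      have : m = 0 := by omega
      subst this
      exact ⟨subset_rfl, List.prefix_refl _⟩
  | succ n ih =>
      rcases Nat.eq_or_lt_of_le h with rfl | h'
      · exact ⟨subset_rfl, List.prefix_refl _⟩
      · obtain ⟨g1, g2, g3, g4, g5⟩ := good_all hCX hCunc hthr n
        have hex : ∃ p, stepProp (Z (n+1)) (n+1) (StageF C Z n) p := by
          apply step_ex g2 g3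
          intro y hy
          exact hthr (n+1) y (hCX (g1 hy))
        obtain ⟨h1, _, _, _, h5, _, _⟩ := stepF_spec hex
        rw [← StageF_succ] at h1 h5
        obtain ⟨i1, i2⟩ := ih (by omega)
        exact ⟨h1.trans i1, i2.trans h5⟩

end Strategy

section Choice
open Set Filter Topology

variable {X : Set (ℕ → Bool)}

open scoped Classical in
def cpick (A : Set (ℕ → Bool)) (l : List (ℕ → Bool)) : ℕ → Bool :=
  if h : (A \ {y | y ∈ l}).Nonempty then h.choose else (fun _ => false)

lemma cpick_spec {A : Set (ℕ → Bool)} {l : List (ℕ → Bool)}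
    (h : (A \ {y | y ∈ l}).Nonempty) : cpick A l ∈ A \ {y | y ∈ l} := by
  rw [cpick, dif_pos h]
  exact h.choose_spec

def clistF (C : Set (ℕ → Bool))
    (Z : ℕ → Set (Psi (List Bool) (branchFam X) × Psi (List Bool) (branchFam X))) :
    ℕ → List (ℕ → Bool) :=
  fun n => Nat.rec ([]) (fun m l => l ++ [cpick (StageF C Z m).2 l]) n

def cF (C : Set (ℕ → Bool))
    (Z : ℕ → Set (Psi (List Bool) (branchFam X) × Psi (List Bool) (branchFam X)))
    (n : ℕ) : ℕ → Bool := cpick (StageF C Z n).2 (clistF C Z n)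

lemma clistF_succ (C : Set (ℕ → Bool)) (Z) (n : ℕ) :
    clistF (X := X) C Z (n+1) = clistF C Z n ++ [cF C Z n] := rfl

lemma clistF_congr (C : Set (ℕ → Bool)) {Z Z'} (n : ℕ) (h : ∀ i ≤ n, Z i = Z' i) :
    clistF (X := X) C Z n = clistF C Z' n := by
  induction n with
  | zero => rfl
  | succ n ih =>
      have h1 := ih (fun i hi => h i (by omega))
      have h2 := StageF_congr C n (fun i hi => h i (by omega))
      rw [clistF_succ, clistF_succ, cF, cF, h1, h2]

lemma cF_congr (C : Set (ℕ → Bool)) {Z Z'} (n : ℕ) (h : ∀ i ≤ n, Z i = Z' i) :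
    cF (X := X) C Z n = cF C Z' n := by
  rw [cF, cF, StageF_congr C n h, clistF_congr C n h]

variable {C : Set (ℕ → Bool)}
variable {Z : ℕ → Set (Psi (List Bool) (branchFam X) × Psi (List Bool) (branchFam X))}

lemma cF_spec {n : ℕ} (hgood : ¬ (StageF C Z n).2.Countable) :
    cF C Z n ∈ (StageF C Z n).2 \ {y | y ∈ clistF C Z n} :=
  cpick_spec (unc_diff_list hgood _)

lemma cF_mem_clist {m n : ℕ} (h : m < n) :
    cF C Z m ∈ clistF C Z n := by
  induction n with
  | zero => omega
  | succ n ih =>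
      rw [clistF_succ]
      rcases Nat.lt_succ_iff_lt_or_eq.mp h with h' | rfl
      · exact List.mem_append_left _ (ih h')
      · exact List.mem_append_right _ (List.mem_singleton_self _)

lemma cF_distinct {m n : ℕ} (h : m < n)
    (hgood : ∀ k, ¬ (StageF C Z k).2.Countable) :
    cF C Z m ≠ cF C Z n := by
  intro heq
  have h1 := cF_spec (n := n) (hgood n)
  apply h1.2
  rw [← heq]
  exact cF_mem_clist h

/-- the limit branch -/
def xinf (C : Set (ℕ → Bool))
    (Z : ℕ → Set (Psi (List Bool) (branchFam X) × Psi (List Bool) (branchFam X))) :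
    ℕ → Bool := fun i => ((StageF C Z (i+1)).1).getD i false

lemma stage_stem_getElem
    (hCX : C ⊆ X) (hCunc : ¬ C.Countable)
    (hthr : ∀ n, ∀ y, y ∈ X → ∃ k, ∀ j, k ≤ j → (pt X y, Sum.inl (restr y j)) ∈ Z n)
    (n i : ℕ) (hi : i < (StageF C Z n).1.length) :
    (StageF C Z n).1[i] = xinf C Z i := by
  set M := max n (i+1) with hM
  have hpn : (StageF C Z n).1 <+: (StageF C Z M).1 :=
    (stage_chain hCX hCunc hthr (le_max_left _ _)).2
  have hpi : (StageF C Z (i+1)).1 <+: (StageF C Z M).1 :=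
    (stage_chain hCX hCunc hthr (le_max_right _ _)).2
  have hleni : i < (StageF C Z (i+1)).1.length := by
    have := (good_all hCX hCunc hthr (i+1)).2.2.2.2
    omega
  have e1 : (StageF C Z n).1[i] = (StageF C Z M).1[i]'(hpn.length_le.trans_lt' hi) :=
    hpn.getElem hi
  have e2 : (StageF C Z (i+1)).1[i] = (StageF C Z M).1[i]'(hpi.length_le.trans_lt' hleni) :=
    hpi.getElem hleni
  have e3 : xinf C Z i = (StageF C Z (i+1)).1[i] := List.getD_eq_getElem _ _ hleni
  rw [e3, e2, e1]

lemma xinf_restr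
    (hCX : C ⊆ X) (hCunc : ¬ C.Countable)
    (hthr : ∀ n, ∀ y, y ∈ X → ∃ k, ∀ j, k ≤ j → (pt X y, Sum.inl (restr y j)) ∈ Z n)
    (n : ℕ) :
    restr (xinf C Z) ((StageF C Z n).1.length) = (StageF C Z n).1 := by
  apply List.ext_getElem (by rw [restr_length])
  intro i h1 h2
  rw [restr_getElem]
  exact (stage_stem_getElem hCX hCunc hthr n i h2).symm

lemma xinf_mem_C
    (hCX : C ⊆ X) (hCunc : ¬ C.Countable) (hCcl : IsClosed C)
    (hthr : ∀ n, ∀ y, y ∈ X → ∃ k, ∀ j, k ≤ j → (pt X y, Sum.inl (restr y j)) ∈ Z n) :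
    xinf C Z ∈ C := by
  have hcoord : ∀ i : ℕ, ∀ j : ℕ, i + 1 ≤ j → cF C Z j i = xinf C Z i := by
    intro i j hj
    have hgoodj := good_all hCX hCunc hthr j
    have hcj : cF C Z j ∈ (StageF C Z j).2 := (cF_spec hgoodj.2.1).1
    have hstem := hgoodj.2.2.1 (cF C Z j) hcj
    have hleni : i < (StageF C Z j).1.length := by
      have := hgoodj.2.2.2.2
      omega
    have h1 : (StageF C Z j).1[i] = cF C Z j i := by
      have h2 := List.getElem_of_eq hstem.symm hleni
      rw [h2, restr_getElem]
    rw [← h1, stage_stem_getElem hCX hCunc hthr j i hleni]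
  have htend : Tendsto (fun j => cF C Z j) atTop (𝓝 (xinf C Z)) := by
    rw [tendsto_pi_nhds]
    intro i
    have hev : ∀ᶠ j in atTop, cF C Z j i = xinf C Z i :=
      eventually_atTop.mpr ⟨i+1, fun j hj => hcoord i j hj⟩
    exact Filter.Tendsto.congr' (hev.mono fun j hj => hj.symm) tendsto_const_nhds
  apply hCcl.mem_of_tendsto htend
  apply Filter.Eventually.of_forall
  intro j
  exact (good_all hCX hCunc hthr j).1 (cF_spec (good_all hCX hCunc hthr j).2.1).1

end Choice

end


theorem perfect_subset_implies_II_wins_on_branching_family (X : Set (ℕ → Bool))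
    (hperf : ∃ C : Set (ℕ → Bool), C ⊆ X ∧ C.Nonempty ∧ IsClosed C ∧
      ∀ x ∈ C, x ∈ closure (C \ {x})) :
    ∀ u : UniformSpace (Psi (List Bool) (branchFam X)),
      u.toTopologicalSpace = psiTopology (List Bool) (branchFam X) →
      ∃ σ : List (Set (Psi (List Bool) (branchFam X) × Psi (List Bool) (branchFam X))) →
          Psi (List Bool) (branchFam X), @IsWinningStrategyForII _ u σ := by
  classical
  obtain ⟨C, hCX, hCne, hCcl, hCacc⟩ := hperf
  intro u hu
  have hCunc : ¬ C.Countable := uncountable_of_perfect hCne hCcl hCacc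
  refine ⟨fun L => pt X (cF C (Zseq u (fun i => L.getD i ∅)) (L.length - 1)), ?_⟩
  intro U hUmem hUdec
  set Z := Zseq u U with hZdef
  have hZmem : ∀ n, Z n ∈ @uniformity _ u := Zseq_mem hUmem
  have hZsymm : ∀ n, SetRel.IsSymm (Z n) := Zseq_symm hUmem
  have hthr : ∀ n, ∀ y, y ∈ X → ∃ k, ∀ j, k ≤ j → (pt X y, Sum.inl (restr y j)) ∈ Z n :=
    fun n y hy => thr_ex u hu (hZmem n) hy
  have hgood : ∀ n, Good C Z n := good_all hCX hCunc hthr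
  have hcmem : ∀ n, cF C Z n ∈ (StageF C Z n).2 := fun n => (cF_spec (hgood n).2.1).1
  have hcX : ∀ n, cF C Z n ∈ X := fun n => hCX ((hgood n).1 (hcmem n))
  -- unfolding of the strategy's responses
  have hresp : ∀ n, respondsTo (X := Psi (List Bool) (branchFam X))
      (fun L => pt X (cF C (Zseq u (fun i => L.getD i ∅)) (L.length - 1))) U n
        = pt X (cF C Z n) := by
    intro n
    show pt X (cF C (Zseq u (fun i => ((List.range (n+1)).map U).getD i ∅))
      ((((List.range (n+1)).map U)).length - 1)) = pt X (cF C Z n)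
    have hlen : (((List.range (n+1)).map U)).length - 1 = n := by simp
    rw [hlen]
    have hagree : ∀ i, i ≤ n → ((List.range (n+1)).map U).getD i ∅ = U i := by
      intro i hi
      have hilen : i < (((List.range (n+1)).map U)).length := by simp; omega
      rw [List.getD_eq_getElem _ _ hilen, List.getElem_map, List.getElem_range]
    have : cF C (Zseq u (fun i => ((List.range (n+1)).map U).getD i ∅)) n = cF C Z n := by
      apply cF_congr C n
      intro i hi
      exact Zseq_congr i (fun j hj => hagree j (le_trans hj hi))
    rw [this]
  refine ⟨?_, ?_, ?_⟩
  · -- legality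
    intro n
    rw [hresp, hresp]
    show (pt X (cF C Z n), pt X (cF C Z (n+1))) ∈ U n
    have hc1 : cF C Z (n+1) ∈ (StageF C Z n).2 :=
      (stage_chain hCX hCunc hthr (Nat.le_succ n)).1 (hcmem (n+1))
    have h1 : (pt X (cF C Z n), Sum.inl (StageF C Z n).1) ∈ Z n :=
      (hgood n).2.2.2.1 _ (hcmem n)
    have h2 : (Sum.inl (StageF C Z n).1, pt X (cF C Z (n+1))) ∈ Z n :=
      (hZsymm n).symm _ _ ((hgood n).2.2.2.1 _ hc1)
    have hrefl : ∀ x, (x, x) ∈ Z n := fun x => refl_mem_uniformity (hZmem n)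
    exact Zseq_comp4 hUmem n h1 h2 (hrefl _) (hrefl _)
  · -- non-convergence
    rintro ⟨l, hl⟩
    have hform : ∀ n, respondsTo (X := Psi (List Bool) (branchFam X))
        (fun L => pt X (cF C (Zseq u (fun i => L.getD i ∅)) (L.length - 1))) U n
          = Sum.inr ⟨branchOf (cF C Z n), ⟨cF C Z n, hcX n, rfl⟩⟩ := by
      intro n
      rw [hresp n, pt_eq (hcX n)]
    cases l with
    | inl s =>
        have hop : {(Sum.inl s : Psi (List Bool) (branchFam X))} ∈
            @nhds _ u.toTopologicalSpace (Sum.inl s) := by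
          rw [hu]
          exact @IsOpen.mem_nhds _ (psiTopology (List Bool) (branchFam X)) _ _
            (psi_isOpen_basic (Or.inl ⟨s, rfl⟩)) rfl
        have hev := hl hop
        rw [Filter.mem_map, Filter.mem_atTop_sets] at hev
        obtain ⟨N, hN⟩ := hev
        have := hN N (le_refl N)
        rw [Set.mem_preimage, hform N] at this
        exact Sum.inr_ne_inl this
    | inr b =>
        have hop : insert (Sum.inr b) ((Sum.inl : List Bool → Psi (List Bool) (branchFam X)) ''
            ((b : Set (List Bool)) \ ↑(∅ : Finset (List Bool)))) ∈
              @nhds _ u.toTopologicalSpace (Sum.inr b) := by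
          rw [hu]
          exact @IsOpen.mem_nhds _ (psiTopology (List Bool) (branchFam X)) _ _
            (psi_isOpen_basic (Or.inr ⟨b, ∅, rfl⟩)) (Set.mem_insert _ _)
        have hev := hl hop
        replace hev := Filter.mem_atTop_sets.mp (Filter.mem_map.mp hev)
        obtain ⟨N, hN⟩ := hev
        have key : ∀ n, N ≤ n → branchOf (cF C Z n) = (b : Set (List Bool)) := by
          intro n hn
          have h1 : (Sum.inr ⟨branchOf (cF C Z n), ⟨cF C Z n, hcX n, rfl⟩⟩ : Psi (List Bool) (branchFam X)) ∈
              insert (Sum.inr b) ((Sum.inl : List Bool → Psi (List Bool) (branchFam X)) ''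
                ((b : Set (List Bool)) \ ↑(∅ : Finset (List Bool)))) := by
            rw [← hform n]; exact hN n hn
          rcases h1 with h1 | ⟨w, _, hw⟩
          · exact congrArg Subtype.val (Sum.inr.inj h1)
          · exact absurd hw (by simp)
        have : cF C Z N = cF C Z (N+1) :=
          branchOf_inj ((key N (le_refl N)).trans (key (N+1) (Nat.le_succ N)).symm)
        exact cF_distinct (Nat.lt_succ_self N) (fun k => (hgood k).2.1) this
  · -- nonempty intersection
    have hxinfC : xinf C Z ∈ C := xinf_mem_C hCX hCunc hCcl hthr
    have hxinfX : xinf C Z ∈ X := hCX hxinfC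
    refine ⟨pt X (xinf C Z), Set.mem_iInter.mpr fun m => ?_⟩
    show (respondsTo (X := Psi (List Bool) (branchFam X))
      (fun L => pt X (cF C (Zseq u (fun i => L.getD i ∅)) (L.length - 1))) U m,
        pt X (xinf C Z)) ∈ U m
    rw [hresp]
    set j := max (m+1) (thrF (Z (m+1)) (xinf C Z)) with hj
    have hcjm : cF C Z j ∈ (StageF C Z m).2 :=
      (stage_chain hCX hCunc hthr (le_trans (by omega : m ≤ m+1) (le_max_left _ _))).1 (hcmem j)
    have h1 : (pt X (cF C Z m), Sum.inl (StageF C Z m).1) ∈ Z m :=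
      (hgood m).2.2.2.1 _ (hcmem m)
    have h2 : (Sum.inl (StageF C Z m).1, pt X (cF C Z j)) ∈ Z m :=
      (hZsymm m).symm _ _ ((hgood m).2.2.2.1 _ hcjm)
    have h3 : (pt X (cF C Z j), Sum.inl (StageF C Z j).1) ∈ Z m :=
      Zseq_antitone hUmem (le_trans (by omega : m ≤ m+1) (le_max_left _ _))
        ((hgood j).2.2.2.1 _ (hcmem j))
    have h4 : (Sum.inl (StageF C Z j).1, pt X (xinf C Z)) ∈ Z m := by
      have hlenj : thrF (Z (m+1)) (xinf C Z) ≤ (StageF C Z j).1.length := by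
        have := (hgood j).2.2.2.2
        have hjge : thrF (Z (m+1)) (xinf C Z) ≤ j := le_max_right _ _
        omega
      have h5 := thrF_spec (hthr (m+1) (xinf C Z) hxinfX) _ hlenj
      rw [xinf_restr hCX hCunc hthr j] at h5
      exact Zseq_antitone hUmem (by omega : m ≤ m+1) ((hZsymm (m+1)).symm _ _ h5)
    exact Zseq_comp4 hUmem m h1 h2 h3 h4
end

section
/- Let ℒ be a ♣*-ladder system on ω₁, S ⊆ ω₁ stationary, and U an open neighbourhood of S × {1} in the ladder system space Ψ(ℒ). Then (ω₁ × {0}) \ U is countable. -/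
/-- The first uncountable ordinal. -/
noncomputable def w1 : Ordinal := (Cardinal.aleph 1).ord

/-- `C` is a club (closed unbounded set) in `ω₁`. -/
def IsClubIn (C : Set Ordinal) : Prop :=
  C ⊆ Set.Iio w1 ∧
  (∀ s : Set Ordinal, s ⊆ C → s.Nonempty → sSup s < w1 → sSup s ∈ C) ∧
  (∀ o < w1, ∃ c ∈ C, o ≤ c)

/-- `S` is a stationary subset of `ω₁`. -/
def IsStationaryIn (S : Set Ordinal) : Prop :=
  S ⊆ Set.Iio w1 ∧ ∀ C : Set Ordinal, IsClubIn C → (S ∩ C).Nonempty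

/-- `L` is a ladder system on `ω₁`: for each countable limit ordinal `α`, `L α` is a
cofinal subset of `α` of order type `ω`. -/
def IsLadderSystem (L : Ordinal → Set Ordinal) : Prop :=
  ∀ α, α < w1 → Order.IsSuccLimit α →
    (L α ⊆ Set.Iio α) ∧ (∀ β < α, ∃ γ ∈ L α, β < γ) ∧
    (∀ β < α, (L α ∩ Set.Iio β).Finite)

/-- The ladder system `L` is a `♣*`-sequence: for every uncountable `A ⊆ ω₁`, the set of
limit ordinals `α` with `L α ∩ A` infinite contains a club. -/
def IsClubsuitStar (L : Ordinal → Set Ordinal) : Prop :=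
  ∀ A : Set Ordinal, A ⊆ Set.Iio w1 → ¬ A.Countable →
    ∃ C : Set Ordinal, IsClubIn C ∧ ∀ α ∈ C, Order.IsSuccLimit α ∧ (L α ∩ A).Infinite

/-- Carrier of the ladder system space `Ψ(ℒ)`: `(ω₁ × {0}) ∪ (Lim × {1})`, where the left
summand is the copy of `ω₁` (level 0) and the right summand the copy of the countable
limit ordinals (level 1). -/
def LPsi : Type 1 := {o : Ordinal // o < w1} ⊕ {o : Ordinal // o < w1 ∧ Order.IsSuccLimit o}

/-- Basic open sets of `Ψ(ℒ)`: singletons at level 0, and sets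
`{(α,1)} ∪ ((L α \ ξ) × {0})` for limit `α` and `ξ < α`. -/
def lBasic (L : Ordinal → Set Ordinal) : Set (Set LPsi) :=
  {s | ∃ p : {o : Ordinal // o < w1}, s = {(Sum.inl p : LPsi)}} ∪
  {s | ∃ (a : {o : Ordinal // o < w1 ∧ Order.IsSuccLimit o}) (ξ : Ordinal), ξ < a.1 ∧
      s = insert (Sum.inr a)
        ((Sum.inl : {o : Ordinal // o < w1} → LPsi) ''
          {p : {o : Ordinal // o < w1} | p.1 ∈ L a.1 ∧ ξ ≤ p.1})}

/-- The topology of the ladder system space `Ψ(ℒ)`. -/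
def lTop (L : Ordinal → Set Ordinal) : TopologicalSpace LPsi :=
  TopologicalSpace.generateFrom (lBasic L)


lemma basic_nbhd (L : Ordinal → Set Ordinal) (U : Set LPsi)
    (hU : TopologicalSpace.GenerateOpen (lBasic L) U) :
    ∀ a : {o : Ordinal // o < w1 ∧ Order.IsSuccLimit o}, Sum.inr a ∈ U →
      ∃ ξ < a.1, insert (Sum.inr a)
        ((Sum.inl : {o : Ordinal // o < w1} → LPsi) ''
          {p : {o : Ordinal // o < w1} | p.1 ∈ L a.1 ∧ ξ ≤ p.1}) ⊆ U := by
  induction hU with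
  | basic V hV =>
    intro a ha
    simp only [lBasic, Set.mem_union, Set.mem_setOf_eq] at hV
    rcases hV with ⟨p, rfl⟩ | ⟨b, ξ, hξ, rfl⟩
    · exact absurd (Set.mem_singleton_iff.mp ha) Sum.inr_ne_inl
    · have hab : a = b := by
        rcases ha with h | h
        · exact Sum.inr_injective h
        · simp at h
      subst hab
      exact ⟨ξ, hξ, subset_refl _⟩
  | univ =>
    intro a _
    exact ⟨0, a.2.2.pos, Set.subset_univ _⟩
  | inter V W _ _ ihV ihW =>
    intro a ha
    obtain ⟨ξ₁, hξ₁, h₁⟩ := ihV a ha.1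
    obtain ⟨ξ₂, hξ₂, h₂⟩ := ihW a ha.2
    refine ⟨max ξ₁ ξ₂, max_lt hξ₁ hξ₂, ?_⟩
    have key : ∀ (ξ : Ordinal), ξ ≤ max ξ₁ ξ₂ →
        insert (Sum.inr a) ((Sum.inl : {o : Ordinal // o < w1} → LPsi) ''
          {p : {o : Ordinal // o < w1} | p.1 ∈ L a.1 ∧ max ξ₁ ξ₂ ≤ p.1}) ⊆
        insert (Sum.inr a) ((Sum.inl : {o : Ordinal // o < w1} → LPsi) ''
          {p : {o : Ordinal // o < w1} | p.1 ∈ L a.1 ∧ ξ ≤ p.1}) := by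
      intro ξ hξ
      apply Set.insert_subset_insert
      apply Set.image_mono
      intro p hp
      exact ⟨hp.1, hξ.trans hp.2⟩
    intro x hx
    exact ⟨h₁ (key ξ₁ (le_max_left _ _) hx), h₂ (key ξ₂ (le_max_right _ _) hx)⟩
  | sUnion s _ ih =>
    intro a ha
    obtain ⟨V, hVs, haV⟩ := ha
    obtain ⟨ξ, hξ, h⟩ := ih V hVs a haV
    exact ⟨ξ, hξ, h.trans (Set.subset_sUnion_of_mem hVs)⟩

theorem clubsuitStar_open_nbhd_of_stationary_co_countable
    (L : Ordinal → Set Ordinal) (hL : IsLadderSystem L) (hcs : IsClubsuitStar L)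
    (S : Set Ordinal) (hS : IsStationaryIn S)
    (U : Set LPsi) (hUopen : (lTop L).IsOpen U)
    (hSU : ∀ α, ∀ h : α < w1 ∧ Order.IsSuccLimit α, α ∈ S → (Sum.inr ⟨α, h⟩ : LPsi) ∈ U) :
    {p : {o : Ordinal // o < w1} | (Sum.inl p : LPsi) ∉ U}.Countable := by
  by_contra hcnt
  set A : Set Ordinal := {β | ∃ h : β < w1, (Sum.inl ⟨β, h⟩ : LPsi) ∉ U} with hA
  have hAsub : A ⊆ Set.Iio w1 := fun β hβ => hβ.1
  have hAunc : ¬ A.Countable := by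
    intro hc
    apply hcnt
    have : {p : {o : Ordinal // o < w1} | (Sum.inl p : LPsi) ∉ U} ⊆
        Subtype.val ⁻¹' A := by
      intro p hp
      exact ⟨p.2, hp⟩
    exact (hc.preimage Subtype.val_injective).mono this
  obtain ⟨C, hC, hCprop⟩ := hcs A hAsub hAunc
  obtain ⟨α, hαS, hαC⟩ := hS.2 C hC
  have hαw1 : α < w1 := hC.1 hαC
  have hαlim : Order.IsSuccLimit α := (hCprop α hαC).1
  have hinf : (L α ∩ A).Infinite := (hCprop α hαC).2
  have hmem : (Sum.inr (⟨α, hαw1, hαlim⟩ : {o : Ordinal // o < w1 ∧ Order.IsSuccLimit o}) : LPsi) ∈ U :=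
    hSU α ⟨hαw1, hαlim⟩ hαS
  obtain ⟨ξ, hξ, hsub⟩ := basic_nbhd L U hUopen ⟨α, hαw1, hαlim⟩ hmem
  have hfin : (L α ∩ Set.Iio ξ).Finite := (hL α hαw1 hαlim).2.2 ξ hξ
  apply hinf
  apply hfin.subset
  intro β hβ
  have hβL := hβ.1
  obtain ⟨hβw1, hβU⟩ := hβ.2
  refine ⟨hβL, ?_⟩
  by_contra hlt
  rw [Set.mem_Iio, not_lt] at hlt
  exact hβU (hsub (Set.mem_insert_of_mem _ ⟨⟨β, hβw1⟩, ⟨hβL, hlt⟩, rfl⟩))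
end

section
/- Let ℒ be a ♣*-ladder system on ω₁, 𝕌 a uniformity generating the topology of Ψ(ℒ), U ∈ 𝕌, and S ⊆ ω₁ stationary. Then there exists a stationary S′ ⊆ S such that (S′ × {1}) × (S′ × {1}) ⊆ U. -/
open Set Ordinal

lemma w1_isLimit : Order.IsSuccLimit w1 := Cardinal.isSuccLimit_ord (Cardinal.aleph0_le_aleph 1)

lemma w1_pos : (0 : Ordinal) < w1 := w1_isLimit.pos

lemma sSup_lt_w1 {s : Set Ordinal} (hc : s.Countable) (hs : ∀ x ∈ s, x < w1) :
    sSup s < w1 := by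
  rcases s.eq_empty_or_nonempty with rfl | hne
  · simpa using w1_pos
  · obtain ⟨f, rfl⟩ := hc.exists_eq_range hne
    have h1 : (⨆ n, f n) < w1 := by
      apply Ordinal.iSup_lt_ord_lift _ (fun n => hs _ (mem_range_self n))
      rw [Cardinal.mk_nat, Cardinal.lift_aleph0, w1, Cardinal.isRegular_aleph_one.cof_eq]
      exact Cardinal.aleph0_lt_aleph_one
    exact h1

lemma bddAbove_of_lt_w1 {s : Set Ordinal} (hs : ∀ x ∈ s, x < w1) : BddAbove s :=
  ⟨w1, fun x hx => (hs x hx).le⟩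

lemma countable_Iio_of_lt_w1 {β : Ordinal} (hβ : β < w1) : (Set.Iio β).Countable := by
  rw [Cardinal.countable_iff_lt_aleph_one, Ordinal.mk_Iio_ordinal, Cardinal.lift_lt_aleph_one]
  exact Cardinal.lt_ord.1 hβ

lemma club_limits : IsClubIn {α | α < w1 ∧ Order.IsSuccLimit α} := by
  refine ⟨fun x hx => hx.1, ?_, ?_⟩
  · intro s hs hne hlt
    refine ⟨hlt, ?_⟩
    by_cases hmem : sSup s ∈ s
    · exact (hs hmem).2
    · obtain ⟨a, ha⟩ := hne
      have hbdd : BddAbove s := bddAbove_of_lt_w1 (fun x hx => (hs hx).1)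
      rw [Ordinal.isSuccLimit_iff, Order.isSuccPrelimit_iff_succ_lt]
      constructor
      · intro h0
        have := le_csSup hbdd ha
        rw [h0, nonpos_iff_eq_zero] at this
        exact (hs ha).2.pos.ne' this
      · intro b hb
        obtain ⟨c, hc, hbc⟩ : ∃ c ∈ s, b < c := by
          by_contra hcon
          push_neg at hcon
          exact absurd (csSup_le ⟨a, ha⟩ hcon) (not_le.2 hb)
        have hcs : c < sSup s := lt_of_le_of_ne (le_csSup hbdd hc) (fun h => hmem (h ▸ hc))
        exact lt_of_le_of_lt (Order.succ_le_of_lt hbc) hcs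
  · intro o ho
    refine ⟨o + Ordinal.omega0, ⟨?_, Ordinal.isSuccLimit_add o Ordinal.isSuccLimit_omega0⟩, ?_⟩
    · exact Ordinal.isPrincipal_add_ord (Cardinal.aleph0_le_aleph 1) ho (by
        rw [w1] at *
        rw [Cardinal.lt_ord, Ordinal.card_omega0]
        exact Cardinal.aleph0_lt_aleph_one)
    · exact le_self_add

lemma club_diag (C : Ordinal → Set Ordinal) (hC : ∀ γ, IsClubIn (C γ)) :
    IsClubIn {α | α < w1 ∧ ∀ γ < α, α ∈ C γ} := by
  refine ⟨fun x hx => hx.1, ?_, ?_⟩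
  · -- closed
    intro s hs hne hlt
    refine ⟨hlt, ?_⟩
    intro γ hγ
    set t : Set Ordinal := {α ∈ s | γ < α} with ht
    have htne : t.Nonempty := by
      by_contra hcon
      rw [Set.not_nonempty_iff_eq_empty] at hcon
      have : ∀ α ∈ s, α ≤ γ := by
        intro α hα
        by_contra h'
        have hmem : α ∈ t := ⟨hα, not_le.1 h'⟩
        rw [hcon] at hmem
        exact hmem
      exact absurd (csSup_le hne this) (not_le.2 hγ)
    have htC : t ⊆ C γ := fun α hα => (hs hα.1).2 γ hα.2
    have hbs : BddAbove s := bddAbove_of_lt_w1 (fun x hx => (hs hx).1)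
    have hbt : BddAbove t := hbs.mono (fun x hx => hx.1)
    have hts : sSup t = sSup s := by
      apply le_antisymm (csSup_le_csSup hbs htne (fun x hx => hx.1))
      apply csSup_le hne
      intro α hα
      by_cases h' : γ < α
      · exact le_csSup hbt ⟨hα, h'⟩
      · obtain ⟨b, hb⟩ := htne
        exact le_trans (le_trans (not_lt.1 h') hb.2.le) (le_csSup hbt hb)
    have := (hC γ).2.1 t htC htne (hts ▸ hlt)
    rwa [hts] at this
  · -- unbounded
    intro o ho
    have hex : ∀ γ β, ∃ c, (β < w1 → (c ∈ C γ ∧ β ≤ c ∧ c < w1)) := by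
      intro γ β
      by_cases hβ : β < w1
      · obtain ⟨c, hc, hbc⟩ := (hC γ).2.2 β hβ
        exact ⟨c, fun _ => ⟨hc, hbc, (hC γ).1 hc⟩⟩
      · exact ⟨0, fun h => absurd h hβ⟩
    choose g hg using hex
    set step : Ordinal → Ordinal :=
      fun β => sSup ((fun γ => g γ β) '' Set.Iio β ∪ {Order.succ β}) with hstepdef
    have hmem_bound : ∀ β, β < w1 → ∀ x ∈ (fun γ => g γ β) '' Set.Iio β ∪ {Order.succ β},
        x < w1 := by
      rintro β hβ x (⟨γ, _, rfl⟩ | hx)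
      · exact (hg γ β hβ).2.2
      · rw [Set.mem_singleton_iff] at hx
        rw [hx]
        exact w1_isLimit.succ_lt hβ
    have hstep_lt : ∀ β, β < w1 → step β < w1 := by
      intro β hβ
      exact sSup_lt_w1 ((((countable_Iio_of_lt_w1 hβ).image _).union (Set.countable_singleton _)))
        (hmem_bound β hβ)
    have hstep_gt : ∀ β, β < w1 → β < step β := by
      intro β hβ
      have : Order.succ β ≤ step β :=
        le_csSup (bddAbove_of_lt_w1 (hmem_bound β hβ)) (Set.mem_union_right _ rfl)
      exact lt_of_lt_of_le (Order.lt_succ β) this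
    have hstep_g : ∀ β, β < w1 → ∀ γ < β, g γ β ≤ step β := by
      intro β hβ γ hγ
      exact le_csSup (bddAbove_of_lt_w1 (hmem_bound β hβ))
        (Set.mem_union_left _ ⟨γ, hγ, rfl⟩)
    set seq : ℕ → Ordinal := fun n => Nat.rec o (fun _ x => step x) n with hseq
    have hseq0 : seq 0 = o := rfl
    have hseqS : ∀ n, seq (n + 1) = step (seq n) := fun n => rfl
    have hseq_lt : ∀ n, seq n < w1 := by
      intro n
      induction n with
      | zero => exact ho
      | succ n ih => rw [hseqS]; exact hstep_lt _ ih
    have hseq_mono : StrictMono seq := by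
      apply strictMono_nat_of_lt_succ
      intro n
      rw [hseqS]
      exact hstep_gt _ (hseq_lt n)
    set α := sSup (Set.range seq) with hα
    have hrange_lt : ∀ x ∈ Set.range seq, x < w1 := by rintro x ⟨n, rfl⟩; exact hseq_lt n
    have hbr : BddAbove (Set.range seq) := bddAbove_of_lt_w1 hrange_lt
    have hαlt : α < w1 := sSup_lt_w1 (Set.countable_range seq) hrange_lt
    have hseq_le : ∀ n, seq n ≤ α := fun n => le_csSup hbr ⟨n, rfl⟩
    refine ⟨α, ⟨hαlt, ?_⟩, le_trans (hseq0 ▸ hseq_le 0) (le_refl _)⟩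
    intro γ hγ
    obtain ⟨n, hn⟩ : ∃ n, γ < seq n := by
      by_contra hcon
      push_neg at hcon
      have : α ≤ γ := csSup_le ⟨_, Set.mem_range_self 0⟩ (by rintro x ⟨n, rfl⟩; exact hcon n)
      exact absurd hγ (not_lt.2 this)
    set t : Set Ordinal := Set.range (fun m => g γ (seq (n + m))) with htdef
    have hγk : ∀ m, γ < seq (n + m) := fun m => lt_of_lt_of_le hn (hseq_mono.monotone (Nat.le_add_right n m))
    have htC : t ⊆ C γ := by rintro x ⟨m, rfl⟩; exact (hg γ _ (hseq_lt _)).1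
    have hbt : BddAbove t := bddAbove_of_lt_w1 (fun x hx => (hC γ).1 (htC hx))
    have hst : sSup t = α := by
      apply le_antisymm
      · apply csSup_le ⟨_, Set.mem_range_self 0⟩
        rintro x ⟨m, rfl⟩
        calc g γ (seq (n + m)) ≤ step (seq (n + m)) :=
              hstep_g _ (hseq_lt _) γ (hγk m)
          _ = seq (n + m + 1) := (hseqS _).symm
          _ ≤ α := hseq_le (n + m + 1)
      · apply csSup_le ⟨_, Set.mem_range_self 0⟩
        rintro x ⟨k, rfl⟩
        calc seq k ≤ seq (n + k) := hseq_mono.monotone (Nat.le_add_left k n)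
          _ ≤ g γ (seq (n + k)) := (hg γ _ (hseq_lt _)).2.1
          _ ≤ sSup t := le_csSup hbt ⟨k, rfl⟩
    have := (hC γ).2.1 t htC ⟨_, Set.mem_range_self 0⟩ (hst ▸ hαlt)
    rwa [hst] at this

lemma omega0_lt_w1 : Ordinal.omega0 < w1 := by
  rw [w1, Cardinal.lt_ord, Ordinal.card_omega0]
  exact Cardinal.aleph0_lt_aleph_one

lemma club_inter {C₁ C₂ : Set Ordinal} (h1 : IsClubIn C₁) (h2 : IsClubIn C₂) :
    IsClubIn (C₁ ∩ C₂) := by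
  refine ⟨fun x hx => h1.1 hx.1, ?_, ?_⟩
  · intro s hs hne hlt
    exact ⟨h1.2.1 s (fun x hx => (hs hx).1) hne hlt, h2.2.1 s (fun x hx => (hs hx).2) hne hlt⟩
  · intro o ho
    set F : Ordinal → Set Ordinal := fun γ => if γ = 0 then C₁ else C₂ with hF
    have hFclub : ∀ γ, IsClubIn (F γ) := by
      intro γ
      by_cases h : γ = 0 <;> simp [hF, h, h1, h2]
    have hD := club_diag F hFclub
    have h2w1 : (2 : Ordinal) < w1 :=
      lt_trans (Ordinal.nat_lt_omega0 2) omega0_lt_w1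
    have hmax : max o 2 < w1 := max_lt ho h2w1
    obtain ⟨d, ⟨hdw1, hdF⟩, hdle⟩ := hD.2.2 (max o 2) hmax
    have h0d : (0 : Ordinal) < d := lt_of_lt_of_le (by norm_num) (le_trans (le_max_right o 2) hdle)
    have h1d : (1 : Ordinal) < d := lt_of_lt_of_le (by norm_num) (le_trans (le_max_right o 2) hdle)
    have hd1 : d ∈ C₁ := by have := hdF 0 h0d; simpa [hF] using this
    have hd2 : d ∈ C₂ := by have := hdF 1 h1d; simpa [hF] using this
    exact ⟨d, ⟨hd1, hd2⟩, le_trans (le_max_left o 2) hdle⟩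

lemma fodor {S : Set Ordinal} (hS : IsStationaryIn S) (f : Ordinal → Ordinal)
    (hf : ∀ α ∈ S, f α < α) : ∃ γ, IsStationaryIn {α ∈ S | f α = γ} := by
  by_contra hcon
  push_neg at hcon
  have hex : ∀ γ, ∃ C, IsClubIn C ∧ ({α ∈ S | f α = γ} ∩ C) = ∅ := by
    intro γ
    have h := hcon γ
    rw [IsStationaryIn] at h
    push_neg at h
    obtain ⟨C, hC, hCne⟩ := h (fun x hx => hS.1 hx.1)
    exact ⟨C, hC, hCne⟩
  choose Cf hCf using hex
  have hD := club_diag Cf (fun γ => (hCf γ).1)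
  obtain ⟨α, hαS, hαD⟩ := hS.2 _ hD
  have hmem : α ∈ {β ∈ S | f β = f α} ∩ Cf (f α) :=
    ⟨⟨hαS, rfl⟩, hαD.2 (f α) (hf α hαS)⟩
  rw [(hCf (f α)).2] at hmem
  exact hmem

lemma genOpen_basic (L : Ordinal → Set Ordinal) (a : {o : Ordinal // o < w1 ∧ Order.IsSuccLimit o})
    (O : Set LPsi) (hO : TopologicalSpace.GenerateOpen (lBasic L) O) :
    (Sum.inr a : LPsi) ∈ O →
    ∃ ξ < a.1, ∀ p : {o : Ordinal // o < w1}, p.1 ∈ L a.1 → ξ ≤ p.1 →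
      (Sum.inl p : LPsi) ∈ O := by
  induction hO with
  | basic s hs =>
    intro hmem
    rcases hs with ⟨p, rfl⟩ | ⟨a', ξ, hξ, rfl⟩
    · exact absurd (Set.mem_singleton_iff.mp hmem) Sum.inr_ne_inl
    · rcases hmem with h | h
      · have haa : a = a' := Sum.inr.inj h
        subst haa
        exact ⟨ξ, hξ, fun p hp hle => Set.mem_insert_of_mem _ ⟨p, ⟨hp, hle⟩, rfl⟩⟩
      · obtain ⟨p, _, hp⟩ := h
        exact absurd hp (by simp)
  | univ => exact fun _ => ⟨0, a.2.2.pos, fun p _ _ => trivial⟩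
  | inter s t _ _ ihs iht =>
    intro hmem
    obtain ⟨ξ₁, hξ₁, h₁⟩ := ihs hmem.1
    obtain ⟨ξ₂, hξ₂, h₂⟩ := iht hmem.2
    exact ⟨max ξ₁ ξ₂, max_lt hξ₁ hξ₂, fun p hp hle =>
      ⟨h₁ p hp (le_trans (le_max_left _ _) hle), h₂ p hp (le_trans (le_max_right _ _) hle)⟩⟩
  | sUnion 𝒮 _ ih =>
    intro hmem
    obtain ⟨s, hs𝒮, hmem_s⟩ := hmem
    obtain ⟨ξ, hξ, hp⟩ := ih s hs𝒮 hmem_s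
    exact ⟨ξ, hξ, fun p h1 h2 => ⟨s, hs𝒮, hp p h1 h2⟩⟩

lemma exists_basic_in_nhds (L : Ordinal → Set Ordinal) (a : {o : Ordinal // o < w1 ∧ Order.IsSuccLimit o})
    {t : Set LPsi} (ht : t ∈ @nhds _ (lTop L) (Sum.inr a : LPsi)) :
    ∃ ξ < a.1, ∀ p : {o : Ordinal // o < w1}, p.1 ∈ L a.1 → ξ ≤ p.1 →
      (Sum.inl p : LPsi) ∈ t := by
  letI : TopologicalSpace LPsi := lTop L
  replace ht := mem_nhds_iff.1 ht
  obtain ⟨O, hOt, hOopen, hmem⟩ := ht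
  have hgen : TopologicalSpace.GenerateOpen (lBasic L) O := hOopen
  obtain ⟨ξ, hξ, h⟩ := genOpen_basic L a O hgen hmem
  exact ⟨ξ, hξ, fun p h1 h2 => hOt (h p h1 h2)⟩

theorem clubsuitStar_entourage_contains_stationary_square
    (L : Ordinal → Set Ordinal) (hL : IsLadderSystem L) (hcs : IsClubsuitStar L)
    (u : UniformSpace LPsi) (hcompat : u.toTopologicalSpace = lTop L)
    (U : Set (LPsi × LPsi)) (hU : U ∈ @uniformity LPsi u)
    (S : Set Ordinal) (hS : IsStationaryIn S) :
    ∃ S' ⊆ S, (∀ α ∈ S', Order.IsSuccLimit α) ∧ IsStationaryIn S' ∧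
      ∀ α, ∀ hα : α < w1 ∧ Order.IsSuccLimit α, α ∈ S' →
        ∀ β, ∀ hβ : β < w1 ∧ Order.IsSuccLimit β, β ∈ S' →
          ((Sum.inr ⟨α, hα⟩ : LPsi), (Sum.inr ⟨β, hβ⟩ : LPsi)) ∈ U := by
  letI : UniformSpace LPsi := u
  obtain ⟨V, hV, hVsymm, hVU⟩ := comp_symm_mem_uniformity_sets hU
  have hex : ∀ α : Ordinal, ∃ x : Ordinal, ∀ hα : α < w1 ∧ Order.IsSuccLimit α, α ∈ S →
      x < α ∧ ∀ hx : x < w1,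
        ((Sum.inr ⟨α, hα⟩ : LPsi), (Sum.inl ⟨x, hx⟩ : LPsi)) ∈ V := by
    intro α
    by_cases hc : (α < w1 ∧ Order.IsSuccLimit α) ∧ α ∈ S
    · obtain ⟨hα, hαS⟩ := hc
      have hball : UniformSpace.ball (Sum.inr ⟨α, hα⟩ : LPsi) V ∈
          @nhds _ (lTop L) (Sum.inr ⟨α, hα⟩) := by
        rw [← hcompat]
        exact UniformSpace.ball_mem_nhds _ hV
      obtain ⟨ξ, hξ, hp⟩ := exists_basic_in_nhds L ⟨α, hα⟩ hball
      obtain ⟨γ, hγL, hγgt⟩ := (hL α hα.1 hα.2).2.1 ξ hξ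
      have hγα : γ < α := (hL α hα.1 hα.2).1 hγL
      refine ⟨γ, fun hα' _ => ⟨hγα, fun hx => ?_⟩⟩
      exact hp ⟨γ, hx⟩ hγL hγgt.le
    · exact ⟨0, fun hα hαS => absurd ⟨hα, hαS⟩ hc⟩
  choose g hg using hex
  set S₁ : Set Ordinal := {α | α ∈ S ∧ Order.IsSuccLimit α} with hS₁def
  have hS₁ : IsStationaryIn S₁ := by
    refine ⟨fun x hx => hS.1 hx.1, fun C hC => ?_⟩
    obtain ⟨x, hxS, hxmem⟩ := hS.2 _ (club_inter hC club_limits)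
    exact ⟨x, ⟨hxS, hxmem.2.2⟩, hxmem.1⟩
  have hreg : ∀ α ∈ S₁, g α < α := fun α hα =>
    (hg α ⟨hS.1 hα.1, hα.2⟩ hα.1).1
  obtain ⟨γ, hγstat⟩ := fodor hS₁ g hreg
  refine ⟨{α ∈ S₁ | g α = γ}, fun x hx => hx.1.1, fun α hα => hα.1.2, hγstat, ?_⟩
  intro α hα hαS' β hβ hβS'
  have hγα : γ < α := hαS'.2 ▸ (hg α hα hαS'.1.1).1
  have hγw1 : γ < w1 := lt_trans hγα hα.1
  have h1 := (hg α hα hαS'.1.1).2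
  rw [hαS'.2] at h1
  have h2 := (hg β hβ hβS'.1.1).2
  rw [hβS'.2] at h2
  exact hVU ⟨Sum.inl ⟨γ, hγw1⟩, h1 hγw1, hVsymm.symm _ _ (h2 hγw1)⟩
end

section
/- If a ladder system ℒ = (L_α : α ∈ Lim) on ω₁ is uniformizable, then ℒ is ℝ-embeddable: there is a continuous map f : Ψ(ℒ) → 2^ω (equivalently ℝ) whose restriction to Lim × {1} is injective. -/
/-- A ladder system is uniformizable if every sequence of colourings `f α : L α → ℕ`
can be uniformized: there is `F : ω₁ → ℕ` agreeing with each `f α` on all but finitely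
many points of `L α`. -/
def IsUniformizable (L : Ordinal → Set Ordinal) : Prop :=
  ∀ f : Ordinal → Ordinal → ℕ, ∃ F : Ordinal → ℕ,
    ∀ α, α < w1 → Order.IsSuccLimit α → {β | β ∈ L α ∧ F β ≠ f α β}.Finite

/-! ### Auxiliary material -/

open Cardinal in
lemma exists_emb : Nonempty ({o : Ordinal.{0} // o < w1 ∧ Order.IsSuccLimit o} ↪ (ℕ → Bool)) := by
  have h : Cardinal.lift.{0} #{o : Ordinal.{0} // o < w1 ∧ Order.IsSuccLimit o} ≤
      Cardinal.lift.{1} #(ℕ → Bool) := by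
    have h1 : #{o : Ordinal.{0} // o < w1 ∧ Order.IsSuccLimit o} ≤ #{o : Ordinal.{0} // o < w1} :=
      Cardinal.mk_subtype_le_of_subset (fun x hx => hx.1)
    have h2 : #{o : Ordinal.{0} // o < w1} = Cardinal.lift.{1} (Cardinal.aleph 1 : Cardinal.{0}) := by
      have e : #{o : Ordinal.{0} // o < w1} = #(Set.Iio w1) := rfl
      rw [e, Ordinal.mk_Iio_ordinal, w1, Cardinal.card_ord]
    have h3 : #(ℕ → Bool) = Cardinal.continuum := by
      rw [← Cardinal.power_def, Cardinal.mk_bool, Cardinal.mk_nat, ← Cardinal.continuum]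
    rw [Cardinal.lift_id', h3]
    exact (h1.trans h2.le).trans (Cardinal.lift_le.mpr Cardinal.aleph_one_le_continuum)
  exact Cardinal.lift_mk_le'.mp h

/-- Coding a finite initial segment of a binary sequence by a natural number. -/
def lcode (x : ℕ → Bool) (n : ℕ) : ℕ := Encodable.encode (List.ofFn (fun i : Fin n => x i))

/-- Decoding: recovers the bits of the coded initial segment. -/
def ldecode (m : ℕ) (k : ℕ) : Bool := ((Encodable.decode (α := List Bool) m).getD []).getD k false

lemma ldecode_lcode (x : ℕ → Bool) {k n : ℕ} (h : k < n) : ldecode (lcode x n) k = x k := by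
  unfold ldecode lcode
  rw [Encodable.encodek, Option.getD_some]
  rw [List.getD_eq_getElem _ _ (by simpa using h)]
  simp

/-- Openness criterion for the topology `lTop L`. -/
lemma lTop_isOpen (L : Ordinal → Set Ordinal) (U : Set LPsi)
    (h : ∀ a : {o : Ordinal // o < w1 ∧ Order.IsSuccLimit o}, Sum.inr a ∈ U → ∃ ξ, ξ < a.1 ∧
      insert (Sum.inr a)
        ((Sum.inl : {o : Ordinal // o < w1} → LPsi) ''
          {p : {o : Ordinal // o < w1} | p.1 ∈ L a.1 ∧ ξ ≤ p.1}) ⊆ U) :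
    (lTop L).IsOpen U := by
  letI := lTop L
  have : U = ⋃₀ {b | b ∈ lBasic L ∧ b ⊆ U} := by
    ext x
    constructor
    · intro hx
      cases x with
      | inl p =>
        exact ⟨{Sum.inl p}, ⟨Or.inl ⟨p, rfl⟩, Set.singleton_subset_iff.mpr hx⟩, rfl⟩
      | inr a =>
        obtain ⟨ξ, hξ, hsub⟩ := h a hx
        exact ⟨_, ⟨Or.inr ⟨a, ξ, hξ, rfl⟩, hsub⟩, Set.mem_insert _ _⟩
    · rintro ⟨b, ⟨_, hbU⟩, hxb⟩
      exact hbU hxb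
  rw [this]
  exact isOpen_sUnion fun b hb => TopologicalSpace.GenerateOpen.basic b hb.1

/-- A finite set of ordinals below a limit ordinal is bounded strictly below it. -/
lemma bound_of_finite {α : Ordinal} (hα : Order.IsSuccLimit α) {S : Set Ordinal} (hS : S.Finite)
    (hsub : S ⊆ Set.Iio α) : ∃ ξ, ξ < α ∧ ∀ s ∈ S, s < ξ := by
  classical
  refine ⟨hS.toFinset.sup Order.succ, ?_, ?_⟩
  · rw [Finset.sup_lt_iff (by simpa using hα.pos)]
    intro s hs
    exact hα.succ_lt (hsub (hS.mem_toFinset.mp hs))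
  · intro s hs
    exact lt_of_lt_of_le (Order.lt_succ s) (Finset.le_sup (hS.mem_toFinset.mpr hs))

theorem uniformizable_ladder_system_is_R_embeddable
    (L : Ordinal → Set Ordinal) (hL : IsLadderSystem L) (hunif : IsUniformizable L) :
    ∃ f : LPsi → (ℕ → Bool),
      @Continuous LPsi (ℕ → Bool) (lTop L) _ f ∧
      Function.Injective
        (fun a : {o : Ordinal // o < w1 ∧ Order.IsSuccLimit o} => f (Sum.inr a)) := by
  classical
  obtain ⟨ι⟩ := exists_emb
  -- the colourings
  set f0 : Ordinal → Ordinal → ℕ := fun α β =>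
    if h : α < w1 ∧ Order.IsSuccLimit α then lcode (ι ⟨α, h⟩) ((L α ∩ Set.Iio β).ncard) else 0 with hf0
  obtain ⟨F, hF⟩ := hunif f0
  refine ⟨fun x => match x with
    | Sum.inl p => ldecode (F p.1)
    | Sum.inr a => ι a, ?_, ?_⟩
  · letI := lTop L
    apply continuous_pi
    intro n
    rw [continuous_discrete_rng]
    intro s
    apply lTop_isOpen
    intro a ha
    have hαw : a.1 < w1 := a.2.1
    have hαl : Order.IsSuccLimit a.1 := a.2.2
    obtain ⟨hsub, hcof, hfin⟩ := hL a.1 hαw hαl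
    have has : ι a n = s := ha
    -- the ladder is infinite
    have hinf : (L a.1).Infinite := by
      intro hfin'
      obtain ⟨γ0, hγ0⟩ := hcof 0 hαl.pos
      have hne : hfin'.toFinset.Nonempty := ⟨γ0, hfin'.mem_toFinset.mpr hγ0.1⟩
      set m := hfin'.toFinset.max' hne with hm
      have hmL : m ∈ L a.1 := hfin'.mem_toFinset.mp (hfin'.toFinset.max'_mem hne)
      obtain ⟨γ, hγL, hγm⟩ := hcof m (hsub hmL)
      exact absurd (hfin'.toFinset.le_max' γ (hfin'.mem_toFinset.mpr hγL)) (not_le.mpr hγm)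
    -- points with small ladder-index form a finite set
    have hsmall : {β | β ∈ L a.1 ∧ (L a.1 ∩ Set.Iio β).ncard ≤ n}.Finite := by
      obtain ⟨t, htsub, htcard⟩ := hinf.exists_subset_card_eq (n + 1)
      have htne : t.Nonempty := Finset.card_pos.mp (by omega)
      set m := t.max' htne with hm
      have hmL : m ∈ L a.1 := htsub (t.max'_mem htne)
      obtain ⟨γ, hγL, hγm⟩ := hcof m (hsub hmL)
      apply Set.Finite.subset (hfin γ (hsub hγL))
      intro β ⟨hβL, hβn⟩
      refine ⟨hβL, ?_⟩
      by_contra hge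
      simp only [Set.mem_Iio, not_lt] at hge
      have htsub' : (t : Set Ordinal) ⊆ L a.1 ∩ Set.Iio β := by
        intro x hx
        exact ⟨htsub hx, lt_of_le_of_lt (t.le_max' x hx) (lt_of_lt_of_le hγm hge)⟩
      have : n + 1 ≤ (L a.1 ∩ Set.Iio β).ncard := by
        rw [← htcard, ← Set.ncard_coe_finset]
        exact Set.ncard_le_ncard htsub' (hfin β (hsub hβL))
      omega
    -- bad points where F disagrees
    have hbad : {β | β ∈ L a.1 ∧ F β ≠ f0 a.1 β}.Finite := hF a.1 hαw hαl
    obtain ⟨ξ, hξα, hξ⟩ := bound_of_finite hαl (hbad.union hsmall)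
      (by
        rintro x (⟨hx, -⟩ | ⟨hx, -⟩) <;> exact hsub hx)
    refine ⟨ξ, hξα, ?_⟩
    rintro x (rfl | ⟨p, ⟨hpL, hpξ⟩, rfl⟩)
    · exact ha
    · -- level 0 point on the ladder above ξ
      have hnotbad : ¬ (p.1 ∈ L a.1 ∧ F p.1 ≠ f0 a.1 p.1) := by
        intro hcontra
        exact absurd hpξ (not_le.mpr (hξ p.1 (Or.inl hcontra)))
      have hnotsmall : ¬ (p.1 ∈ L a.1 ∧ (L a.1 ∩ Set.Iio p.1).ncard ≤ n) := by
        intro hcontra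
        exact absurd hpξ (not_le.mpr (hξ p.1 (Or.inr hcontra)))
      have hFp : F p.1 = f0 a.1 p.1 := by
        by_contra hne
        exact hnotbad ⟨hpL, hne⟩
      have hn : n < (L a.1 ∩ Set.Iio p.1).ncard := by
        by_contra hle
        exact hnotsmall ⟨hpL, not_lt.mp hle⟩
      show ldecode (F p.1) n = s
      rw [hFp, hf0]
      simp only [dif_pos (⟨hαw, hαl⟩ : a.1 < w1 ∧ Order.IsSuccLimit a.1)]
      rw [ldecode_lcode _ hn]
      exact has
  · intro a b h
    exact ι.injective h
end
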